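/- Let H be a real Hilbert space and A a bounded self-adjoint positive operator on H with spectrum contained in [c₀, c₁], 0 < c₀ ≤ c₁ ≤ 1/2. Let x_1, x_2, ... ∈ H with ‖x_i‖ ≤ 1, let x̄_i = (x_1+...+x_i)/i with x̄_0 = 0, and define K_n = ∏_{i=1}^n (1 + ⟨A x̄_{i−1}, x_i⟩). If limsup_n √n·‖x̄_n‖/√(log n) > √(c₁/c₀), then limsup_n K_n = ∞. -/

import Mathlib

open scoped RealInnerProductSpace
open Filter


/-- Taylor-type bound for the logarithm. -/
lemma log_lb {t : ℝ} (ht : |t| ≤ 1/2) :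
    t - Real.log (1 + t) ≤ t^2/2 + (4/5)*|t|^3 := by
  have h1 : |(-t)| < 1 := by rw [abs_neg]; linarith [abs_nonneg t]
  have h2 := Real.abs_log_sub_add_sum_range_le h1 5
  have hsum : (∑ i ∈ Finset.range 5, (-t) ^ (i + 1) / (i + 1))
      = -t + t^2/2 - t^3/3 + t^4/4 - t^5/5 := by
    simp [Finset.sum_range_succ]
    ring
  rw [hsum, abs_neg, sub_neg_eq_add] at h2
  have h3 : (-t + t^2/2 - t^3/3 + t^4/4 - t^5/5) + Real.log (1 + t)
      ≥ -(|t|^6 / (1 - |t|)) := neg_le_of_abs_le h2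
  have habs : 0 ≤ |t| := abs_nonneg t
  have hta : t ≤ |t| := le_abs_self t
  have htb : -|t| ≤ t := neg_abs_le t
  have hpow : |t|^6 / (1 - |t|) ≤ 2*|t|^6 := by
    rw [div_le_iff₀ (by linarith)]
    nlinarith [pow_nonneg habs 6]
  have hsq : t^2 = |t|^2 := (sq_abs t).symm
  -- reduce to polynomial inequality
  have hpoly : -t^3/3 + t^4/4 - t^5/5 + 2*|t|^6 ≤ (4/5)*|t|^3 := by
    rcases le_or_gt 0 t with h | h
    · rw [abs_of_nonneg h]
      nlinarith [pow_nonneg h 3, pow_nonneg h 4, pow_nonneg h 5, pow_nonneg h 6]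
    · rw [abs_of_neg h]
      nlinarith [pow_pos (neg_pos.2 h) 3, pow_pos (neg_pos.2 h) 4, pow_pos (neg_pos.2 h) 5,
        pow_pos (neg_pos.2 h) 6]
  linarith

section opaux
variable {H : Type*} [NormedAddCommGroup H] [InnerProductSpace ℝ H] [CompleteSpace H]

/-- Cauchy–Schwarz for a symmetric operator with nonnegative quadratic form. -/
lemma op_cs (B : H →L[ℝ] H) (hsym : ∀ u w : H, ⟪B u, w⟫ = ⟪u, B w⟫)
    (hpos : ∀ z : H, 0 ≤ ⟪B z, z⟫) (u w : H) :
    ⟪B u, w⟫ ^ 2 ≤ ⟪B u, u⟫ * ⟪B w, w⟫ := by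
  have hq : ∀ r : ℝ, 0 ≤ ⟪B w, w⟫ * (r * r) + (2 * ⟪B u, w⟫) * r + ⟪B u, u⟫ := by
    intro r
    have h := hpos (u + r • w)
    have hwu : ⟪B w, u⟫ = ⟪B u, w⟫ := by rw [hsym w u, real_inner_comm]
    have hexp : ⟪B (u + r • w), u + r • w⟫
        = ⟪B w, w⟫ * (r * r) + (2 * ⟪B u, w⟫) * r + ⟪B u, u⟫ := by
      simp only [map_add, map_smul, inner_add_left, inner_add_right,
        real_inner_smul_left, real_inner_smul_right, hwu]
      ring
    linarith [hexp ▸ h]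
  have hd := discrim_le_zero hq
  rw [discrim] at hd
  nlinarith [hd]

/-- A symmetric operator with nonnegative form whose form comes arbitrarily close to zero
on the unit sphere is not invertible. -/
lemma not_unit_of_approx (B : H →L[ℝ] H) (hsym : ∀ u w : H, ⟪B u, w⟫ = ⟪u, B w⟫)
    (hpos : ∀ z : H, 0 ≤ ⟪B z, z⟫)
    (happrox : ∀ ε : ℝ, 0 < ε → ∃ v : H, ‖v‖ = 1 ∧ ⟪B v, v⟫ < ε) :
    ¬ IsUnit B := by
  intro hU
  obtain ⟨un, hun⟩ := hU
  set C : H →L[ℝ] H := ↑un⁻¹ with hC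
  have hCB : ∀ z : H, C (B z) = z := by
    intro z
    have h1 : (C * B : H →L[ℝ] H) = 1 := by rw [hC, ← hun]; exact un.inv_mul
    calc C (B z) = (C * B) z := rfl
    _ = z := by rw [h1]; rfl
  set ε : ℝ := (‖C‖^2 * ‖B‖ + 1)⁻¹ with hεdef
  have hεpos : 0 < ε := by positivity
  obtain ⟨v, hv1, hvε⟩ := happrox ε hεpos
  have hBv0 : 0 ≤ ⟪B v, v⟫ := hpos v
  -- ‖v‖ ≤ ‖C‖ ‖B v‖
  have h1 : (1:ℝ) ≤ ‖C‖ * ‖B v‖ := by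
    calc (1:ℝ) = ‖v‖ := hv1.symm
    _ = ‖C (B v)‖ := by rw [hCB]
    _ ≤ ‖C‖ * ‖B v‖ := C.le_opNorm _
  -- ‖B v‖^2 ≤ ⟪B v, v⟫ * ‖B‖
  have h2 : ‖B v‖^2 * ‖B v‖^2 ≤ ⟪B v, v⟫ * (‖B‖ * (‖B v‖ * ‖B v‖)) := by
    have hcs := op_cs B hsym hpos v (B v)
    have hn : ⟪B v, B v⟫ = ‖B v‖^2 := real_inner_self_eq_norm_sq (B v)
    have hb : ⟪B (B v), B v⟫ ≤ ‖B‖ * (‖B v‖ * ‖B v‖) := by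
      calc ⟪B (B v), B v⟫ ≤ ‖B (B v)‖ * ‖B v‖ := real_inner_le_norm _ _
      _ ≤ (‖B‖ * ‖B v‖) * ‖B v‖ := by
          apply mul_le_mul_of_nonneg_right (B.le_opNorm _) (norm_nonneg _)
      _ = ‖B‖ * (‖B v‖ * ‖B v‖) := by ring
    calc ‖B v‖^2 * ‖B v‖^2 = ⟪B v, B v⟫^2 := by rw [hn]; ring
    _ ≤ ⟪B v, v⟫ * ⟪B (B v), B v⟫ := hcs
    _ ≤ ⟪B v, v⟫ * (‖B‖ * (‖B v‖ * ‖B v‖)) := mul_le_mul_of_nonneg_left hb hBv0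
  have h3 : ‖B v‖^2 ≤ ⟪B v, v⟫ * ‖B‖ := by
    rcases eq_or_lt_of_le (norm_nonneg (B v)) with h | h
    · rw [← h]; simpa using mul_nonneg hBv0 (norm_nonneg B)
    · have h4 : (0:ℝ) < ‖B v‖^2 := by positivity
      nlinarith [h2]
  -- contradiction
  have h5 : (1:ℝ) ≤ ‖C‖^2 * ‖B v‖^2 := by nlinarith [h1, norm_nonneg C, norm_nonneg (B v)]
  have h6 : ‖C‖^2 * ‖B v‖^2 ≤ ‖C‖^2 * (⟪B v, v⟫ * ‖B‖) :=
    mul_le_mul_of_nonneg_left h3 (sq_nonneg _)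
  have h7 : ε * (‖C‖^2 * ‖B‖ + 1) = 1 := by
    rw [hεdef]; field_simp
  nlinarith [h5, h6, h7, hεpos, mul_le_mul_of_nonneg_left hvε.le
    (mul_nonneg (sq_nonneg ‖C‖) (norm_nonneg B)), norm_nonneg B, sq_nonneg ‖C‖]

end opaux

section opaux2
variable {H : Type*} [NormedAddCommGroup H] [InnerProductSpace ℝ H] [CompleteSpace H]

set_option maxHeartbeats 1000000 in
lemma form_bounds (A : H →L[ℝ] H) (hsa : IsSelfAdjoint A) {c₀ c₁ : ℝ} (hc0 : 0 < c₀)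
    (hspec : spectrum ℝ A ⊆ Set.Icc c₀ c₁) :
    ∀ v : H, c₀ * ‖v‖^2 ≤ ⟪A v, v⟫ ∧ ⟪A v, v⟫ ≤ c₁ * ‖v‖^2 := by
  have hsym : ∀ u w : H, ⟪A u, w⟫ = ⟪u, A w⟫ := fun u w => hsa.isSymmetric u w
  -- scaling identity
  have hscale : ∀ (z : H), z ≠ 0 → ⟪A z, z⟫ = ‖z‖^2 * ⟪A (‖z‖⁻¹ • z), ‖z‖⁻¹ • z⟫ := by
    intro z hz
    have hz0 : ‖z‖ ≠ 0 := norm_ne_zero_iff.2 hz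
    rw [map_smul, real_inner_smul_left, real_inner_smul_right]
    field_simp
  have hnorm1 : ∀ (z : H), z ≠ 0 → ‖(‖z‖⁻¹ • z)‖ = 1 := by
    intro z hz
    rw [norm_smul, norm_inv, norm_norm, inv_mul_cancel₀ (norm_ne_zero_iff.2 hz)]
  -- bound |⟪A w, w⟫| ≤ ‖A‖ on the unit sphere
  have hball : ∀ w : H, ‖w‖ = 1 → |⟪A w, w⟫| ≤ ‖A‖ := by
    intro w hw
    calc |⟪A w, w⟫| ≤ ‖A w‖ * ‖w‖ := abs_real_inner_le_norm _ _
    _ ≤ (‖A‖ * ‖w‖) * ‖w‖ := mul_le_mul_of_nonneg_right (A.le_opNorm w) (norm_nonneg w)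
    _ = ‖A‖ := by rw [hw]; ring
  -- the generic argument
  have main : ∀ μ : ℝ, (∀ z : H, μ * ‖z‖^2 ≤ ⟪A z, z⟫) →
      (∀ ε : ℝ, 0 < ε → ∃ v : H, ‖v‖ = 1 ∧ ⟪A v, v⟫ < μ + ε) → μ ∈ spectrum ℝ A := by
    intro μ hmu happ
    rw [spectrum.mem_iff]
    intro hUnit
    set B : H →L[ℝ] H := A - μ • 1 with hB
    have hBapp : ∀ z : H, B z = A z - μ • z := by
      intro z; simp [hB, ContinuousLinearMap.sub_apply, ContinuousLinearMap.smul_apply]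
    have hBinner : ∀ z w : H, ⟪B z, w⟫ = ⟪A z, w⟫ - μ * ⟪z, w⟫ := by
      intro z w; rw [hBapp, inner_sub_left, real_inner_smul_left]
    have hBsym : ∀ u w : H, ⟪B u, w⟫ = ⟪u, B w⟫ := by
      intro u w
      rw [hBinner, hsym, hBapp, inner_sub_right, real_inner_smul_right]
    have hBpos : ∀ z : H, 0 ≤ ⟪B z, z⟫ := by
      intro z
      rw [hBinner, real_inner_self_eq_norm_sq]
      linarith [hmu z]
    have hBapprox : ∀ ε : ℝ, 0 < ε → ∃ v : H, ‖v‖ = 1 ∧ ⟪B v, v⟫ < ε := by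
      intro ε hε
      obtain ⟨v, hv1, hv2⟩ := happ ε hε
      refine ⟨v, hv1, ?_⟩
      rw [hBinner, real_inner_self_eq_norm_sq, hv1]
      norm_num; linarith
    apply not_unit_of_approx B hBsym hBpos hBapprox
    have : B = -((algebraMap ℝ (H →L[ℝ] H)) μ - A) := by
      rw [hB, Algebra.algebraMap_eq_smul_one]; exact (neg_sub _ _).symm
    rw [this]
    exact hUnit.neg
  intro v
  constructor
  · by_contra hcon
    push_neg at hcon
    have hv : v ≠ 0 := by
      intro h; rw [h] at hcon; simp at hcon
    set S : Set ℝ := (fun w : H => ⟪A w, w⟫) '' {w : H | ‖w‖ = 1} with hS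
    have hSne : S.Nonempty := ⟨_, ⟨_, hnorm1 v hv, rfl⟩⟩
    have hSbdd : BddBelow S := by
      refine ⟨-‖A‖, fun r hr => ?_⟩
      obtain ⟨w, hw, rfl⟩ := hr
      linarith [neg_abs_le ⟪A w, w⟫, hball w hw]
    set m : ℝ := sInf S with hm
    have hmle : ∀ w : H, ‖w‖ = 1 → m ≤ ⟪A w, w⟫ := fun w hw =>
      csInf_le hSbdd ⟨w, hw, rfl⟩
    have hform : ∀ z : H, m * ‖z‖^2 ≤ ⟪A z, z⟫ := by
      intro z
      rcases eq_or_ne z 0 with rfl | hz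
      · simp
      · rw [hscale z hz]
        have h1 := hmle _ (hnorm1 z hz)
        have h2 : (0:ℝ) ≤ ‖z‖^2 := sq_nonneg _
        nlinarith [h1, h2]
    have hmlt : m < c₀ := by
      have h1 := hmle _ (hnorm1 v hv)
      have h2 : ⟪A (‖v‖⁻¹ • v), ‖v‖⁻¹ • v⟫ < c₀ := by
        have h3 := hscale v hv
        have h4 : (0:ℝ) < ‖v‖^2 := by
          have := norm_pos_iff.2 hv; positivity
        nlinarith [h3, hcon]
      linarith
    have happ : ∀ ε : ℝ, 0 < ε → ∃ w : H, ‖w‖ = 1 ∧ ⟪A w, w⟫ < m + ε := by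
      intro ε hε
      have h1 : m < m + ε := by linarith
      obtain ⟨r, hrS, hrlt⟩ := (csInf_lt_iff hSbdd hSne).1 h1
      obtain ⟨w, hw, rfl⟩ := hrS
      exact ⟨w, hw, hrlt⟩
    have hmem := main m hform happ
    have := hspec hmem
    rw [Set.mem_Icc] at this
    linarith [this.1]
  · by_contra hcon
    push_neg at hcon
    have hv : v ≠ 0 := by
      intro h; rw [h] at hcon
      simp only [norm_zero] at hcon
      have h0 : ⟪A (0:H), (0:H)⟫ = 0 := by simp
      rw [h0] at hcon; nlinarith
    -- apply the lower-bound argument to -A ... or do sSup version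
    set S : Set ℝ := (fun w : H => ⟪A w, w⟫) '' {w : H | ‖w‖ = 1} with hS
    have hSne : S.Nonempty := ⟨_, ⟨_, hnorm1 v hv, rfl⟩⟩
    have hSbdd : BddAbove S := by
      refine ⟨‖A‖, fun r hr => ?_⟩
      obtain ⟨w, hw, rfl⟩ := hr
      linarith [le_abs_self ⟪A w, w⟫, hball w hw]
    set M : ℝ := sSup S with hM
    have hMge : ∀ w : H, ‖w‖ = 1 → ⟪A w, w⟫ ≤ M := fun w hw =>
      le_csSup hSbdd ⟨w, hw, rfl⟩
    have hform : ∀ z : H, ⟪A z, z⟫ ≤ M * ‖z‖^2 := by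
      intro z
      rcases eq_or_ne z 0 with rfl | hz
      · simp
      · rw [hscale z hz]
        have h1 := hMge _ (hnorm1 z hz)
        have h2 : (0:ℝ) ≤ ‖z‖^2 := sq_nonneg _
        nlinarith [h1, h2]
    have hMgt : c₁ < M := by
      have h2 : c₁ < ⟪A (‖v‖⁻¹ • v), ‖v‖⁻¹ • v⟫ := by
        have h3 := hscale v hv
        have h4 : (0:ℝ) < ‖v‖^2 := by
          have := norm_pos_iff.2 hv; positivity
        nlinarith [h3, hcon]
      linarith [hMge _ (hnorm1 v hv)]
    -- show M ∈ spectrum via B := M•1 - A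
    have hmem : M ∈ spectrum ℝ A := by
      rw [spectrum.mem_iff]
      intro hUnit
      set B : H →L[ℝ] H := M • 1 - A with hB
      have hBapp : ∀ z : H, B z = M • z - A z := by
        intro z; simp [hB, ContinuousLinearMap.sub_apply, ContinuousLinearMap.smul_apply]
      have hBinner : ∀ z w : H, ⟪B z, w⟫ = M * ⟪z, w⟫ - ⟪A z, w⟫ := by
        intro z w; rw [hBapp, inner_sub_left, real_inner_smul_left]
      have hBsym : ∀ u w : H, ⟪B u, w⟫ = ⟪u, B w⟫ := by
        intro u w
        rw [hBinner, hsym, hBapp, inner_sub_right, real_inner_smul_right]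
      have hBpos : ∀ z : H, 0 ≤ ⟪B z, z⟫ := by
        intro z
        rw [hBinner, real_inner_self_eq_norm_sq]
        linarith [hform z]
      have hBapprox : ∀ ε : ℝ, 0 < ε → ∃ w : H, ‖w‖ = 1 ∧ ⟪B w, w⟫ < ε := by
        intro ε hε
        have h1 : M - ε < M := by linarith
        obtain ⟨r, hrS, hrlt⟩ := exists_lt_of_lt_csSup hSne h1
        obtain ⟨w, hw, rfl⟩ := hrS
        refine ⟨w, hw, ?_⟩
        rw [hBinner, real_inner_self_eq_norm_sq, hw]
        norm_num; linarith
      apply not_unit_of_approx B hBsym hBpos hBapprox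
      have : B = (algebraMap ℝ (H →L[ℝ] H)) M - A := by
        rw [hB, Algebra.algebraMap_eq_smul_one]
      rw [this]
      exact hUnit
    have := hspec hmem
    rw [Set.mem_Icc] at this
    linarith [this.2]

end opaux2

set_option maxHeartbeats 1000000 in
lemma key_real_ineq {s c t q qw : ℝ} (hs : 1 ≤ s) (hc : 0 < c) (hc2 : c ≤ 1/2)
    (hq0 : 0 ≤ q) (hqc : q ≤ c) (hqw0 : 0 ≤ qw) (hqwc : qw ≤ c) (htq : t^2 ≤ q * qw) :
    1/(2*s) * ((s-1)^2*q + 2*(s-1)*t + qw) - (s-1)/2*q - c/(2*s)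
      - 3*Real.sqrt c/(s*Real.sqrt s) ≤ Real.log (1 + t) := by
  have hs0 : (0:ℝ) < s := by linarith
  have habs : |t| ≤ c := by
    have h1 : t^2 ≤ c^2 := le_trans htq (by nlinarith)
    nlinarith [abs_nonneg t, sq_abs t]
  have ht2 : |t| ≤ 1/2 := le_trans habs hc2
  have hlog := log_lb ht2
  have ha0 : (0:ℝ) ≤ |t| := abs_nonneg t
  have hta : t ≤ |t| := le_abs_self t
  have htb : -|t| ≤ t := neg_abs_le t
  have hsqa : t^2 = |t|^2 := (sq_abs t).symm
  have hqa : |t|^2 ≤ q * c := by rw [← hsqa]; exact le_trans htq (by nlinarith)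
  have hu2 : (Real.sqrt s)^2 = s := Real.sq_sqrt hs0.le
  have hv2 : (Real.sqrt c)^2 = c := Real.sq_sqrt hc.le
  have hu1 : 1 ≤ Real.sqrt s := Real.one_le_sqrt.2 hs
  have hv0 : 0 < Real.sqrt c := Real.sqrt_pos.2 hc
  have hu0 : 0 < Real.sqrt s := lt_of_lt_of_le one_pos hu1
  obtain ⟨u, huu⟩ : ∃ u, u = Real.sqrt s := ⟨_, rfl⟩
  obtain ⟨v, hvv⟩ : ∃ v, v = Real.sqrt c := ⟨_, rfl⟩
  obtain ⟨a, haa⟩ : ∃ a, a = |t| := ⟨_, rfl⟩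
  rw [← huu] at hu2 hu1 hu0 ⊢
  rw [← hvv] at hv2 hv0 ⊢
  rw [← haa] at ha0 hta htb hsqa hqa hlog ht2 habs
  -- middle inequality
  have hmid : (3/2) * a / s ≤ a^2/10 + 3*v/(s*u) := by
    rcases le_or_gt (v*u) 2 with hvu | hvu
    · have h1 : (3/2) * a / s ≤ (3/2) * c / s :=
        (div_le_div_iff_of_pos_right hs0).2 (by linarith)
      have h2 : (3/2) * c / s ≤ 3*v/(s*u) := by
        rw [div_le_div_iff₀ hs0 (by positivity), ← hv2]
        have h := mul_le_mul_of_nonneg_left hvu (mul_nonneg hs0.le hv0.le)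
        nlinarith [h]
      have h3 : (0:ℝ) ≤ a^2/10 := by positivity
      linarith
    · have heq : a^2/10 + 45/(8*s^2) = (4*a^2*s^2+225)/(40*s^2) := by
        field_simp; ring
      have h1 : (3/2)*a/s ≤ a^2/10 + 45/(8*s^2) := by
        rw [heq, div_le_div_iff₀ hs0 (by positivity)]
        nlinarith [mul_nonneg hs0.le (sq_nonneg (2*a*s - 15))]
      have h2 : 45/(8*s^2) ≤ 3*v/(s*u) := by
        rw [div_le_div_iff₀ (by positivity) (by positivity)]
        have h : 2*u^3 ≤ (v*u)*u^3 :=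
          mul_le_mul_of_nonneg_right hvu.le (by positivity)
        calc 45*(s*u) = (45/2)*(2*u^3) := by rw [← hu2]; ring
          _ ≤ (45/2)*((v*u)*u^3) := by linarith
          _ ≤ 3*v*(8*s^2) := by
              rw [← hu2]
              nlinarith [mul_nonneg hv0.le (pow_nonneg hu0.le 4)]
      linarith
  -- lower bound for the q-term
  have hq_lb : a^2/(2*c) - a/(2*s) ≤ (s-1)/(2*s)*q := by
    have hql : a^2/c ≤ q := by rw [div_le_iff₀ hc]; exact hqa
    have hcoef : (0:ℝ) ≤ (s-1)/(2*s) := div_nonneg (by linarith) (by linarith)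
    have h1 : (s-1)/(2*s)*(a^2/c) ≤ (s-1)/(2*s)*q := mul_le_mul_of_nonneg_left hql hcoef
    have h2 : (s-1)/(2*s)*(a^2/c) = a^2/(2*c) - (a^2/c)/(2*s) := by
      field_simp
    have h3 : (a^2/c)/(2*s) ≤ a/(2*s) := by
      apply (div_le_div_iff_of_pos_right (by positivity : (0:ℝ) < 2*s)).2
      rw [div_le_iff₀ hc]; nlinarith
    linarith
  -- coefficient inequality
  have hcc : a^2/2 + (4/5)*(c*a^2) + a^2/10 ≤ a^2/(2*c) := by
    have h1 : a^2/(2*c) - (a^2/2 + (4/5)*(c*a^2) + a^2/10) = a^2*(1-2*c)*(1+(4/5)*c)/(2*c) := by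
      field_simp; ring
    have h2 : (0:ℝ) ≤ a^2*(1-2*c)*(1+(4/5)*c)/(2*c) := by
      apply div_nonneg _ (by positivity)
      have h3 : (0:ℝ) ≤ 1 - 2*c := by linarith
      positivity
    linarith
  have hcube : a^3 ≤ c*a^2 := by nlinarith
  have hts : -a/s ≤ t/s := (div_le_div_iff_of_pos_right hs0).2 htb
  have hah : a/(2*s) + a/s = (3/2)*a/s := by ring
  have hna : -a/s = -(a/s) := by ring
  -- main estimate
  have hmain : t - Real.log (1+t) ≤ t/s + (s-1)/(2*s)*q + 3*v/(s*u) := by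
    have h0 : t - Real.log (1+t) ≤ a^2/2 + (4/5)*a^3 := by
      rw [← hsqa] at *; linarith [hlog]
    linarith [hmid, hq_lb, hcc, hcube, hts]
  -- identity and conclusion
  have hid : 1/(2*s) * ((s-1)^2*q + 2*(s-1)*t + qw) - (s-1)/2*q
      = -((s-1)/(2*s)*q) + t - t/s + qw/(2*s) := by
    field_simp; ring
  have hqw_div : qw/(2*s) ≤ c/(2*s) := (div_le_div_iff_of_pos_right (by positivity)).2 hqwc
  linarith [hmain, hid, hqw_div]

lemma harmonic_le_log (n : ℕ) :
    ∑ j ∈ Finset.range n, (1:ℝ)/((j:ℝ)+1) ≤ 1 + Real.log n := by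
  induction n with
  | zero => simp
  | succ n ih =>
    rw [Finset.sum_range_succ]
    rcases Nat.eq_zero_or_pos n with rfl | hn
    · simp
    · have hn0 : (0:ℝ) < n := by exact_mod_cast hn
      have hstep : Real.log n + 1/((n:ℝ)+1) ≤ Real.log (n+1) := by
        have h1 : Real.log ((n+1)/n) ≥ 1 - ((n+1)/(n:ℝ))⁻¹ :=
          Real.one_sub_inv_le_log_of_pos (by positivity)
        have h2 : Real.log (((n:ℝ)+1)/n) = Real.log ((n:ℝ)+1) - Real.log n :=
          Real.log_div (by positivity) (by positivity)
        have h3 : (((n:ℝ)+1)/(n:ℝ))⁻¹ = (n:ℝ)/((n:ℝ)+1) := by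
          rw [inv_div]
        have h4 : 1 - (n:ℝ)/((n:ℝ)+1) = 1/((n:ℝ)+1) := by
          field_simp
          ring
        rw [h2, h3, h4] at h1
        linarith
      have : ((n:ℝ)+1) = ((n+1 : ℕ) : ℝ) := by push_cast; ring
      rw [← this]
      linarith

lemma pseries_le_three (n : ℕ) :
    ∑ j ∈ Finset.range n, 1/(((j:ℝ)+1)*Real.sqrt ((j:ℝ)+1)) ≤ 3 := by
  have key : ∀ m : ℕ, 1 ≤ m →
      ∑ j ∈ Finset.range m, 1/(((j:ℝ)+1)*Real.sqrt ((j:ℝ)+1)) ≤ 3 - 2/Real.sqrt m := by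
    intro m hm
    induction m, hm using Nat.le_induction with
    | base => norm_num
    | succ n hn ih =>
      rw [Finset.sum_range_succ]
      have hn0 : (0:ℝ) < n := by exact_mod_cast hn
      have ha0 : 0 < Real.sqrt n := Real.sqrt_pos.2 hn0
      have ha1 : 1 ≤ Real.sqrt n := Real.one_le_sqrt.2 (by exact_mod_cast hn)
      have hb0 : 0 < Real.sqrt ((n:ℝ)+1) := Real.sqrt_pos.2 (by positivity)
      have hab : Real.sqrt n ≤ Real.sqrt ((n:ℝ)+1) := Real.sqrt_le_sqrt (by linarith)
      have ha2 : (Real.sqrt n)^2 = n := Real.sq_sqrt hn0.le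
      have hb2 : (Real.sqrt ((n:ℝ)+1))^2 = (n:ℝ)+1 := Real.sq_sqrt (by positivity)
      have hstep : 1/(((n:ℝ)+1)*Real.sqrt ((n:ℝ)+1))
          ≤ 2/Real.sqrt n - 2/Real.sqrt ((n:ℝ)+1) := by
        set a := Real.sqrt n
        set b := Real.sqrt ((n:ℝ)+1)
        have hfrac : 2/a - 2/b = 2/(a*b*(a+b)) := by
          rw [div_sub_div _ _ (ne_of_gt ha0) (ne_of_gt hb0)]
          rw [div_eq_div_iff (by positivity) (by positivity)]
          linear_combination (2*a*b)*hb2 - (2*a*b)*ha2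
        rw [hfrac, ← hb2]
        rw [div_le_div_iff₀ (by positivity) (by positivity)]
        nlinarith [mul_pos ha0 hb0, mul_le_mul_of_nonneg_right hab hb0.le]
      have hcast : ((n+1 : ℕ):ℝ) = (n:ℝ)+1 := by push_cast; ring
      rw [hcast]
      linarith
  rcases Nat.eq_zero_or_pos n with rfl | hn
  · simp
  · have h1 := key n hn
    have h2 : 0 < Real.sqrt n := Real.sqrt_pos.2 (by exact_mod_cast hn)
    have : 0 ≤ 2/Real.sqrt n := by positivity
    linarith

set_option maxHeartbeats 2000000 in
theorem multivariate_weakly_forcing_slln {H : Type*} [NormedAddCommGroup H]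
    [InnerProductSpace ℝ H] [CompleteSpace H]
    (A : H →L[ℝ] H) (hsa : IsSelfAdjoint A)
    (c₀ c₁ : ℝ) (hc0 : 0 < c₀) (hc01 : c₀ ≤ c₁) (hc1 : c₁ ≤ 1 / 2)
    (hspec : spectrum ℝ A ⊆ Set.Icc c₀ c₁)
    (x : ℕ → H) (hx : ∀ i, ‖x i‖ ≤ 1)
    (xbar : ℕ → H) (hxbar : ∀ i, xbar i = (i : ℝ)⁻¹ • ∑ j ∈ Finset.Icc 1 i, x j)
    (K : ℕ → ℝ) (hK : ∀ n, K n = ∏ i ∈ Finset.Icc 1 n, (1 + ⟪A (xbar (i - 1)), x i⟫))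
    (hls : Filter.atTop.limsup
      (fun n : ℕ => ((Real.sqrt n * ‖xbar n‖ / Real.sqrt (Real.log n) : ℝ) : EReal))
      > ((Real.sqrt (c₁ / c₀) : ℝ) : EReal)) :
    Filter.atTop.limsup (fun n : ℕ => ((K n : ℝ) : EReal)) = ⊤ := by
  have hc1pos : 0 < c₁ := lt_of_lt_of_le hc0 hc01
  have hsym : ∀ u w : H, ⟪A u, w⟫ = ⟪u, A w⟫ := fun u w => hsa.isSymmetric u w
  have hfb := form_bounds A hsa hc0 hspec
  have hQ0 : ∀ v : H, 0 ≤ ⟪A v, v⟫ := fun v => le_trans (by positivity) (hfb v).1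
  have hCS : ∀ u w : H, ⟪A u, w⟫^2 ≤ ⟪A u, u⟫ * ⟪A w, w⟫ := op_cs A hsym hQ0
  -- norms of xbar
  have hxbn : ∀ i, ‖xbar i‖ ≤ 1 := by
    intro i
    rw [hxbar i]
    rcases Nat.eq_zero_or_pos i with rfl | hi
    · simp
    · have hi0 : (0:ℝ) < i := by exact_mod_cast hi
      have hsum : ‖∑ j ∈ Finset.Icc 1 i, x j‖ ≤ (i:ℝ) := by
        calc ‖∑ j ∈ Finset.Icc 1 i, x j‖ ≤ ∑ j ∈ Finset.Icc 1 i, ‖x j‖ := norm_sum_le _ _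
        _ ≤ ∑ _j ∈ Finset.Icc 1 i, (1:ℝ) := Finset.sum_le_sum (fun j _ => hx j)
        _ = (i:ℝ) := by simp [Nat.card_Icc]
      rw [norm_smul, norm_inv, Real.norm_natCast]
      calc (i:ℝ)⁻¹ * ‖∑ j ∈ Finset.Icc 1 i, x j‖ ≤ (i:ℝ)⁻¹ * (i:ℝ) :=
            mul_le_mul_of_nonneg_left hsum (by positivity)
      _ = 1 := by field_simp
  have hQle : ∀ v : H, ‖v‖ ≤ 1 → ⟪A v, v⟫ ≤ c₁ := by
    intro v hv
    calc ⟪A v, v⟫ ≤ c₁ * ‖v‖^2 := (hfb v).2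
    _ ≤ c₁ * 1 := by
        apply mul_le_mul_of_nonneg_left _ hc1pos.le
        nlinarith [norm_nonneg v]
    _ = c₁ := mul_one c₁
  have hQxb : ∀ i, ⟪A (xbar i), xbar i⟫ ≤ c₁ := fun i => hQle _ (hxbn i)
  have hQx : ∀ i, ⟪A (x i), x i⟫ ≤ c₁ := fun i => hQle _ (hx i)
  have habs : ∀ v w : H, ‖v‖ ≤ 1 → ‖w‖ ≤ 1 → |⟪A v, w⟫| ≤ c₁ := by
    intro v w hv hw
    have h1 := hCS v w
    have h2 : ⟪A v, w⟫^2 ≤ c₁^2 := by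
      calc ⟪A v, w⟫^2 ≤ ⟪A v, v⟫ * ⟪A w, w⟫ := h1
      _ ≤ c₁ * c₁ := mul_le_mul (hQle v hv) (hQle w hw) (hQ0 w) hc1pos.le
      _ = c₁^2 := by ring
    nlinarith [abs_nonneg ⟪A v, w⟫, sq_abs ⟪A v, w⟫]
  have hpos1 : ∀ j : ℕ, 0 < 1 + ⟪A (xbar j), x (j+1)⟫ := by
    intro j
    have := habs (xbar j) (x (j+1)) (hxbn j) (hx (j+1))
    have h2 := neg_abs_le ⟪A (xbar j), x (j+1)⟫
    linarith
  -- update identity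
  have hupd : ∀ j : ℕ, ((j:ℝ)+1) • xbar (j+1) = (j:ℝ) • xbar j + x (j+1) := by
    intro j
    have hc : ((j+1:ℕ):ℝ) = (j:ℝ)+1 := by push_cast; ring
    have h1 : ((j:ℝ)+1) • xbar (j+1) = ∑ k ∈ Finset.Icc 1 (j+1), x k := by
      rw [hxbar (j+1), hc, smul_inv_smul₀ (by positivity)]
    have h2 : (j:ℝ) • xbar j = ∑ k ∈ Finset.Icc 1 j, x k := by
      rw [hxbar j]
      rcases Nat.eq_zero_or_pos j with rfl | hj
      · simp
      · have : ((j:ℕ):ℝ) ≠ 0 := by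
          have : (0:ℝ) < j := by exact_mod_cast hj
          linarith
        rw [smul_inv_smul₀ this]
    rw [h1, h2, Finset.sum_Icc_succ_top (Nat.succ_le_succ (Nat.zero_le j))]
  -- quadratic expansion
  have hexp : ∀ j : ℕ, ((j:ℝ)+1)^2 * ⟪A (xbar (j+1)), xbar (j+1)⟫
      = (j:ℝ)^2 * ⟪A (xbar j), xbar j⟫ + 2*(j:ℝ)*⟪A (xbar j), x (j+1)⟫
        + ⟪A (x (j+1)), x (j+1)⟫ := by
    intro j
    have h1 : ((j:ℝ)+1)^2 * ⟪A (xbar (j+1)), xbar (j+1)⟫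
        = ⟪A (((j:ℝ)+1) • xbar (j+1)), ((j:ℝ)+1) • xbar (j+1)⟫ := by
      rw [map_smul, real_inner_smul_left, real_inner_smul_right]; ring
    rw [h1, hupd j]
    have hba : ⟪A (x (j+1)), xbar j⟫ = ⟪A (xbar j), x (j+1)⟫ := by
      rw [hsym (x (j+1)) (xbar j), real_inner_comm]
    simp only [map_add, map_smul, inner_add_left, inner_add_right,
      real_inner_smul_left, real_inner_smul_right, hba]
    ring
  -- per-term estimate
  have hterm : ∀ j : ℕ,
      ((j:ℝ)+1)/2 * ⟪A (xbar (j+1)), xbar (j+1)⟫ - (j:ℝ)/2 * ⟪A (xbar j), xbar j⟫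
        - c₁/(2*((j:ℝ)+1)) - 3*Real.sqrt c₁/(((j:ℝ)+1)*Real.sqrt ((j:ℝ)+1))
      ≤ Real.log (1 + ⟪A (xbar j), x (j+1)⟫) := by
    intro j
    have hs : (1:ℝ) ≤ (j:ℝ)+1 := by
      have : (0:ℝ) ≤ j := Nat.cast_nonneg j
      linarith
    have hkey := key_real_ineq (s := (j:ℝ)+1) (c := c₁)
      (t := ⟪A (xbar j), x (j+1)⟫) (q := ⟪A (xbar j), xbar j⟫)
      (qw := ⟪A (x (j+1)), x (j+1)⟫) hs hc1pos hc1 (hQ0 _) (hQxb j) (hQ0 _)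
      (hQx (j+1)) (hCS _ _)
    have hsm : ((j:ℝ)+1)-1 = (j:ℝ) := by ring
    rw [hsm] at hkey
    have hj1 : ((j:ℝ)+1) ≠ 0 := by positivity
    rw [← hexp j] at hkey
    have heq : 1/(2*((j:ℝ)+1)) * (((j:ℝ)+1)^2 * ⟪A (xbar (j+1)), xbar (j+1)⟫)
        = ((j:ℝ)+1)/2 * ⟪A (xbar (j+1)), xbar (j+1)⟫ := by
      field_simp
    linarith [hkey, heq]
  -- inductive lower bound on log K
  have hKbound : ∀ n : ℕ, 0 < K n ∧
      ((n:ℝ)/2) * ⟪A (xbar n), xbar n⟫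
        - (c₁/2) * (∑ j ∈ Finset.range n, (1:ℝ)/((j:ℝ)+1))
        - 3*Real.sqrt c₁ * (∑ j ∈ Finset.range n, 1/(((j:ℝ)+1)*Real.sqrt ((j:ℝ)+1)))
      ≤ Real.log (K n) := by
    intro n
    induction n with
    | zero =>
      constructor
      · rw [hK 0]; simp
      · rw [hK 0]; simp
    | succ n ih =>
      have hKn1 : K (n+1) = K n * (1 + ⟪A (xbar n), x (n+1)⟫) := by
        rw [hK (n+1), hK n, Finset.prod_Icc_succ_top (Nat.succ_le_succ (Nat.zero_le n))]
        norm_num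
      have hp := hpos1 n
      constructor
      · rw [hKn1]; exact mul_pos ih.1 hp
      · rw [hKn1, Real.log_mul (ne_of_gt ih.1) (ne_of_gt hp),
          Finset.sum_range_succ, Finset.sum_range_succ]
        have ht := hterm n
        have hcast : ((n+1:ℕ):ℝ) = (n:ℝ)+1 := by push_cast; ring
        rw [hcast]
        have e1 : (c₁/2) * ((1:ℝ)/((n:ℝ)+1)) = c₁/(2*((n:ℝ)+1)) := by rw [div_mul_div_comm, mul_one]
        have e2 : 3*Real.sqrt c₁ * (1/(((n:ℝ)+1)*Real.sqrt ((n:ℝ)+1)))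
            = 3*Real.sqrt c₁/(((n:ℝ)+1)*Real.sqrt ((n:ℝ)+1)) := mul_one_div _ _
        linarith [ih.2, ht, e1, e2]
  -- endgame
  rw [EReal.eq_top_iff_forall_lt]
  intro y
  obtain ⟨z, hz1, hz2⟩ := exists_between hls
  have hzt : z ≠ ⊤ := hz2.ne_top
  have hzb : z ≠ ⊥ := ne_bot_of_gt hz1
  set r : ℝ := z.toReal with hr
  have hzr : (r : EReal) = z := EReal.coe_toReal hzt hzb
  have hr1 : Real.sqrt (c₁/c₀) < r := by
    rw [← hzr] at hz1; exact EReal.coe_lt_coe_iff.1 hz1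
  have hrpos : 0 < r := lt_of_le_of_lt (Real.sqrt_nonneg _) hr1
  have hr2 : c₁/c₀ < r^2 := by
    have h := Real.sq_sqrt (show (0:ℝ) ≤ c₁/c₀ by positivity)
    nlinarith [Real.sqrt_nonneg (c₁/c₀)]
  have hcr : c₁ < c₀ * r^2 := by
    rw [div_lt_iff₀ hc0] at hr2; linarith [hr2]
  have hδ : 0 < (c₀*r^2 - c₁)/2 := by linarith
  have hfreq : ∃ᶠ n : ℕ in atTop, (r : EReal)
      < ((Real.sqrt n * ‖xbar n‖ / Real.sqrt (Real.log n) : ℝ) : EReal) := by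
    rw [hzr]; exact frequently_lt_of_lt_limsup (h := hz2)
  set Cst : ℝ := (Real.log (max (y+1) 1) + c₁/2 + 9)/((c₀*r^2 - c₁)/2) with hCst
  have hev1 : ∀ᶠ n : ℕ in atTop, Cst ≤ Real.log n :=
    (Real.tendsto_log_atTop.comp tendsto_natCast_atTop_atTop).eventually_ge_atTop Cst
  have hev2 : ∀ᶠ n : ℕ in atTop, 2 ≤ n := eventually_ge_atTop 2
  have hfreq2 : ∃ᶠ n : ℕ in atTop, ((y+1 : ℝ) : EReal) ≤ ((K n : ℝ) : EReal) := by
    refine (hfreq.and_eventually (hev1.and hev2)).mono ?_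
    rintro n ⟨h1, h2, h3⟩
    have hn2 : (2:ℝ) ≤ (n:ℝ) := by exact_mod_cast h3
    have hn1 : (1:ℝ) < (n:ℝ) := by linarith
    have hlogn : 0 < Real.log n := Real.log_pos hn1
    have hrl : r < Real.sqrt n * ‖xbar n‖ / Real.sqrt (Real.log n) :=
      EReal.coe_lt_coe_iff.1 h1
    have hsqlog : 0 < Real.sqrt (Real.log n) := Real.sqrt_pos.2 hlogn
    have hmul : r * Real.sqrt (Real.log n) < Real.sqrt n * ‖xbar n‖ :=
      (lt_div_iff₀ hsqlog).1 hrl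
    have hsq : r^2 * Real.log n < (n:ℝ) * ‖xbar n‖^2 := by
      have h4 := pow_lt_pow_left₀ hmul (by positivity) (two_ne_zero)
      rw [mul_pow, mul_pow, Real.sq_sqrt hlogn.le, Real.sq_sqrt (Nat.cast_nonneg n)] at h4
      exact h4
    have hKb := hKbound n
    have hQlow := (hfb (xbar n)).1
    have hH := harmonic_le_log n
    have hP := pseries_le_three n
    have hsc1 : Real.sqrt c₁ ≤ 1 := Real.sqrt_le_one.2 (by linarith)
    have hsc0 : (0:ℝ) ≤ Real.sqrt c₁ := Real.sqrt_nonneg _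
    have hE1 : (c₁/2) * (∑ j ∈ Finset.range n, (1:ℝ)/((j:ℝ)+1))
        ≤ (c₁/2)*(1 + Real.log n) := mul_le_mul_of_nonneg_left hH (by linarith)
    have hE2 : 3*Real.sqrt c₁ * (∑ j ∈ Finset.range n, 1/(((j:ℝ)+1)*Real.sqrt ((j:ℝ)+1)))
        ≤ 9 := by
      calc 3*Real.sqrt c₁ * (∑ j ∈ Finset.range n, 1/(((j:ℝ)+1)*Real.sqrt ((j:ℝ)+1)))
          ≤ 3*Real.sqrt c₁ * 3 := mul_le_mul_of_nonneg_left hP (by positivity)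
      _ ≤ 9 := by nlinarith
    have hmain : (c₀*r^2/2) * Real.log n ≤ ((n:ℝ)/2) * ⟪A (xbar n), xbar n⟫ := by
      have h5 : c₀ * (r^2 * Real.log n) ≤ c₀ * ((n:ℝ) * ‖xbar n‖^2) :=
        mul_le_mul_of_nonneg_left hsq.le hc0.le
      have h6 : (n:ℝ) * (c₀ * ‖xbar n‖^2) ≤ (n:ℝ) * ⟪A (xbar n), xbar n⟫ :=
        mul_le_mul_of_nonneg_left hQlow (Nat.cast_nonneg n)
      nlinarith [h5, h6]
    have h7 : Real.log (max (y+1) 1) + c₁/2 + 9 ≤ ((c₀*r^2 - c₁)/2) * Real.log n := by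
      have h8 : Cst * ((c₀*r^2-c₁)/2) ≤ Real.log n * ((c₀*r^2-c₁)/2) :=
        mul_le_mul_of_nonneg_right h2 hδ.le
      have h8' : Cst * ((c₀*r^2-c₁)/2) = Real.log (max (y+1) 1) + c₁/2 + 9 := by
        rw [hCst]; exact div_mul_cancel₀ _ (ne_of_gt hδ)
      nlinarith [h8, h8']
    have h9 : Real.log (max (y+1) 1) ≤ Real.log (K n) := by
      linarith [hE1, hE2, hmain, h7, hKb.2]
    have hmax1 : (0:ℝ) < max (y+1) 1 := lt_of_lt_of_le one_pos (le_max_right _ _)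
    have h10 : max (y+1) 1 ≤ K n := (Real.log_le_log_iff hmax1 hKb.1).1 h9
    have h11 : y + 1 ≤ K n := le_trans (le_max_left _ _) h10
    exact EReal.coe_le_coe_iff.2 h11
  have hlim := le_limsup_of_frequently_le' hfreq2
  calc ((y:ℝ) : EReal) < ((y+1:ℝ) : EReal) := EReal.coe_lt_coe_iff.2 (by linarith)
  _ ≤ _ := hlim
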